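/- For any composition α = (α_1,...,α_ℓ) of nonnegative integers, e_α(∂X) Δ_L(X;Y) = Σ_{T ∈ CT_α} ε'(T, L) Δ_{∂T(L)}(X;Y), where the sum is over ℓ-tuples T = (T_1,...,T_ℓ) of strictly increasing columns with T_j having α_j entries from {1,...,n}; ∂T(L) replaces each cell (p_i,q_i) of L by (p_i − |T^{-1}(i)|, q_i); and ε'(T,L) = ε(∂T_1···∂T_ℓ(L)) · ε(∂T_2···∂T_ℓ(L)) ··· ε(∂T_ℓ(L)), where ε(M) = 1 if M has n distinct cells in the positive quadrant and 0 otherwise. -/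

import Mathlib

open MvPolynomial

noncomputable def Delta (n : ℕ) (L : Fin n → ℕ × ℕ) : MvPolynomial (Fin n ⊕ Fin n) ℚ :=
  Matrix.det (Matrix.of fun i j : Fin n =>
    C ((((L j).1.factorial : ℚ) * ((L j).2.factorial : ℚ))⁻¹) *
      X (Sum.inl i) ^ (L j).1 * X (Sum.inr i) ^ (L j).2)

noncomputable def DeltaZ (n : ℕ) (L : Fin n → ℤ × ℤ) : MvPolynomial (Fin n ⊕ Fin n) ℚ :=
  if ∀ i, 0 ≤ (L i).1 ∧ 0 ≤ (L i).2 then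
    Delta n fun i => ((L i).1.toNat, (L i).2.toNat)
  else 0

noncomputable def diffOp {σ : Type} (f P : MvPolynomial σ ℚ) : MvPolynomial σ ℚ :=
  ∑ d ∈ f.support, ∑ e ∈ P.support,
    monomial (e - d) (f.coeff d * P.coeff e *
      ∏ i ∈ d.support, (Nat.descFactorial (e i) (d i) : ℚ))

def eps (n : ℕ) (L : Fin n → ℤ × ℤ) : ℚ :=
  if Function.Injective L ∧ ∀ i, 0 ≤ (L i).1 ∧ 0 ≤ (L i).2 then 1 else 0

def tailCount (n : ℕ) {ℓ : ℕ} (α : Fin ℓ → ℕ) (T : ∀ j, Fin (α j) → Fin n) (k : ℕ)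
    (i : Fin n) : ℕ :=
  ∑ j : Fin ℓ, if k ≤ (j : ℕ) then (Finset.univ.filter fun r => T j r = i).card else 0

def applyTail (n : ℕ) {ℓ : ℕ} (α : Fin ℓ → ℕ) (T : ∀ j, Fin (α j) → Fin n) (k : ℕ)
    (L : Fin n → ℤ × ℤ) : Fin n → ℤ × ℤ :=
  fun i => ((L i).1 - tailCount n α T k i, (L i).2)

def epsTuple (n : ℕ) {ℓ : ℕ} (α : Fin ℓ → ℕ) (T : ∀ j, Fin (α j) → Fin n)
    (L : Fin n → ℤ × ℤ) : ℚ :=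
  ∏ k : Fin ℓ, eps n (applyTail n α T k L)

noncomputable def eInt (n : ℕ) (k : ℤ) : MvPolynomial (Fin n) ℚ :=
  if 0 ≤ k then esymm (Fin n) ℚ k.toNat else 0

noncomputable def schurDual (n ℓ : ℕ) (lam' : Fin ℓ → ℕ) : MvPolynomial (Fin n) ℚ :=
  Matrix.det (Matrix.of fun i j : Fin ℓ => eInt n ((lam' j : ℤ) + (i : ℕ) - (j : ℕ)))

def IsCSYT (n : ℕ) {ℓ : ℕ} (α : Fin ℓ → ℕ) (T : ∀ j, Fin (α j) → Fin n) : Prop :=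
  (∀ j, StrictMono (T j)) ∧
  ∀ j j' : Fin ℓ, (j' : ℕ) = (j : ℕ) + 1 →
    ∀ (i : Fin (α j)) (i' : Fin (α j')), (i : ℕ) = (i' : ℕ) → T j i ≤ T j' i'

open scoped Classical

lemma diffOp_eq {σ : Type} (f P : MvPolynomial σ ℚ) (s t : Finset (σ →₀ ℕ))
    (hs : f.support ⊆ s) (ht : P.support ⊆ t) :
    diffOp f P = ∑ d ∈ s, ∑ e ∈ t,
      monomial (e - d) (f.coeff d * P.coeff e *
        ∏ i ∈ d.support, (Nat.descFactorial (e i) (d i) : ℚ)) := by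
  rw [diffOp]
  rw [Finset.sum_subset hs]
  · refine Finset.sum_congr rfl fun d _ => ?_
    rw [Finset.sum_subset ht]
    intro e _ he
    rw [MvPolynomial.notMem_support_iff.mp he]
    simp
  · intro d _ hd
    rw [MvPolynomial.notMem_support_iff.mp hd]
    simp

lemma diffOp_zero_right {σ : Type} (f : MvPolynomial σ ℚ) : diffOp f 0 = 0 := by
  simp [diffOp]

lemma diffOp_add_right {σ : Type} (f P Q : MvPolynomial σ ℚ) :
    diffOp f (P + Q) = diffOp f P + diffOp f Q := by
  rw [diffOp_eq f (P+Q) f.support (P.support ∪ Q.support) le_rfl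
      (MvPolynomial.support_add),
    diffOp_eq f P f.support (P.support ∪ Q.support) le_rfl Finset.subset_union_left,
    diffOp_eq f Q f.support (P.support ∪ Q.support) le_rfl Finset.subset_union_right,
    ← Finset.sum_add_distrib]
  refine Finset.sum_congr rfl fun d _ => ?_
  rw [← Finset.sum_add_distrib]
  refine Finset.sum_congr rfl fun e _ => ?_
  rw [MvPolynomial.coeff_add, ← map_add]
  ring_nf

lemma diffOp_smul_right {σ : Type} (f P : MvPolynomial σ ℚ) (c : ℚ) :
    diffOp f (c • P) = c • diffOp f P := by
  rcases eq_or_ne c 0 with rfl | hc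
  · simp [diffOp_zero_right]
  · rw [diffOp_eq f (c • P) f.support P.support le_rfl
      (by rw [MvPolynomial.support_smul_eq hc]),
      diffOp, Finset.smul_sum]
    refine Finset.sum_congr rfl fun d _ => ?_
    rw [Finset.smul_sum]
    refine Finset.sum_congr rfl fun e _ => ?_
    rw [MvPolynomial.smul_monomial]
    simp [MvPolynomial.coeff_smul]
    ring_nf

lemma diffOp_sum_right {σ ι : Type} (f : MvPolynomial σ ℚ) (s : Finset ι)
    (P : ι → MvPolynomial σ ℚ) :
    diffOp f (∑ a ∈ s, P a) = ∑ a ∈ s, diffOp f (P a) := by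
  induction s using Finset.induction with
  | empty => simp [diffOp_zero_right]
  | insert _ _ h ih => rw [Finset.sum_insert h, diffOp_add_right, ih, Finset.sum_insert h]

lemma diffOp_zero_left {σ : Type} (P : MvPolynomial σ ℚ) : diffOp 0 P = 0 := by
  simp [diffOp]

lemma diffOp_add_left {σ : Type} (f g P : MvPolynomial σ ℚ) :
    diffOp (f + g) P = diffOp f P + diffOp g P := by
  rw [diffOp_eq (f+g) P (f.support ∪ g.support) P.support MvPolynomial.support_add le_rfl,
    diffOp_eq f P (f.support ∪ g.support) P.support Finset.subset_union_left le_rfl,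
    diffOp_eq g P (f.support ∪ g.support) P.support Finset.subset_union_right le_rfl,
    ← Finset.sum_add_distrib]
  refine Finset.sum_congr rfl fun d _ => ?_
  rw [← Finset.sum_add_distrib]
  refine Finset.sum_congr rfl fun e _ => ?_
  rw [MvPolynomial.coeff_add, ← map_add]
  ring_nf

lemma diffOp_sum_left {σ ι : Type} (s : Finset ι) (f : ι → MvPolynomial σ ℚ)
    (P : MvPolynomial σ ℚ) :
    diffOp (∑ a ∈ s, f a) P = ∑ a ∈ s, diffOp (f a) P := by
  induction s using Finset.induction with
  | empty => simp [diffOp_zero_left]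
  | insert _ _ h ih => rw [Finset.sum_insert h, diffOp_add_left, ih, Finset.sum_insert h]

lemma diffOp_monomial_monomial {σ : Type} (d e : σ →₀ ℕ) (c b : ℚ) :
    diffOp (monomial d c) (monomial e b) =
      monomial (e - d) (c * b * ∏ i ∈ d.support, (Nat.descFactorial (e i) (d i) : ℚ)) := by
  rw [diffOp_eq _ _ {d} {e} (MvPolynomial.support_monomial_subset)
    (MvPolynomial.support_monomial_subset)]
  simp only [Finset.sum_singleton]
  congr 1
  simp [MvPolynomial.coeff_monomial]

lemma desc_add (e d1 d2 : ℕ) :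
    Nat.descFactorial e (d1 + d2) =
      Nat.descFactorial e d2 * Nat.descFactorial (e - d2) d1 := by
  induction d1 with
  | zero => simp
  | succ d1 ih =>
    rw [Nat.succ_add, Nat.descFactorial_succ, ih, Nat.descFactorial_succ]
    rw [Nat.sub_sub, Nat.add_comm d2 d1]
    ring

lemma prod_desc_pad {σ : Type} (d m : σ →₀ ℕ) (s : Finset σ) (hs : d.support ⊆ s) :
    ∏ i ∈ d.support, (Nat.descFactorial (m i) (d i) : ℚ) =
      ∏ i ∈ s, (Nat.descFactorial (m i) (d i) : ℚ) := by
  refine Finset.prod_subset hs (fun i _ hi => ?_)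
  rw [Finsupp.notMem_support_iff.mp hi]
  simp

lemma diffOp_mul {σ : Type} (f g P : MvPolynomial σ ℚ) :
    diffOp (f * g) P = diffOp f (diffOp g P) := by
  have key : ∀ (d1 d2 e : σ →₀ ℕ) (c1 c2 b : ℚ),
      diffOp (monomial d1 c1 * monomial d2 c2) (monomial e b)
        = diffOp (monomial d1 c1) (diffOp (monomial d2 c2) (monomial e b)) := by
    intro d1 d2 e c1 c2 b
    rw [MvPolynomial.monomial_mul, diffOp_monomial_monomial, diffOp_monomial_monomial,
      diffOp_monomial_monomial]
    have hidx : e - (d1 + d2) = e - d2 - d1 := by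
      rw [tsub_tsub, add_comm d2 d1]
    rw [hidx]
    congr 1
    have hs1 : d1.support ⊆ d1.support ∪ d2.support := Finset.subset_union_left
    have hs2 : d2.support ⊆ d1.support ∪ d2.support := Finset.subset_union_right
    have hs12 : (d1 + d2).support ⊆ d1.support ∪ d2.support := Finsupp.support_add
    have hpt : ∀ i ∈ d1.support ∪ d2.support,
        (Nat.descFactorial (e i) ((d1 + d2) i) : ℚ) =
          (Nat.descFactorial (e i) (d2 i) : ℚ) *
            (Nat.descFactorial ((e - d2) i) (d1 i) : ℚ) := by
      intro i _
      rw [Finsupp.add_apply, Finsupp.tsub_apply, desc_add]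
      push_cast
      ring
    rw [prod_desc_pad (d1 + d2) e _ hs12, prod_desc_pad d1 (e - d2) _ hs1,
      prod_desc_pad d2 e _ hs2, Finset.prod_congr rfl hpt, Finset.prod_mul_distrib]
    ring
  have L : diffOp (f * g) P = ∑ d1 ∈ f.support, ∑ d2 ∈ g.support, ∑ e ∈ P.support,
      diffOp (monomial d1 (f.coeff d1) * monomial d2 (g.coeff d2))
        (monomial e (P.coeff e)) := by
    conv_lhs => rw [f.as_sum, g.as_sum, P.as_sum]
    rw [Finset.sum_mul_sum, diffOp_sum_left]
    refine Finset.sum_congr rfl fun d1 _ => ?_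
    rw [diffOp_sum_left]
    exact Finset.sum_congr rfl fun d2 _ => diffOp_sum_right _ _ _
  have R : diffOp f (diffOp g P) = ∑ d1 ∈ f.support, ∑ d2 ∈ g.support, ∑ e ∈ P.support,
      diffOp (monomial d1 (f.coeff d1)) (diffOp (monomial d2 (g.coeff d2))
        (monomial e (P.coeff e))) := by
    conv_lhs => rw [f.as_sum]
    rw [diffOp_sum_left]
    refine Finset.sum_congr rfl fun d1 _ => ?_
    conv_lhs => rw [g.as_sum, P.as_sum]
    rw [diffOp_sum_left, diffOp_sum_right]
    refine Finset.sum_congr rfl fun d2 _ => ?_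
    rw [diffOp_sum_right, diffOp_sum_right]
  rw [L, R]
  exact Finset.sum_congr rfl fun d1 _ => Finset.sum_congr rfl fun d2 _ =>
    Finset.sum_congr rfl fun e _ => key d1 d2 e _ _ _

lemma diffOp_one {σ : Type} (P : MvPolynomial σ ℚ) : diffOp 1 P = P := by
  conv_lhs => rw [P.as_sum]
  rw [diffOp_sum_right]
  conv_rhs => rw [P.as_sum]
  refine Finset.sum_congr rfl fun e _ => ?_
  have : (1 : MvPolynomial σ ℚ) = monomial 0 1 := by simp
  rw [this, diffOp_monomial_monomial]
  simp

lemma diffOp_X_eq_pderiv {σ : Type} (v : σ) (P : MvPolynomial σ ℚ) :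
    diffOp (X v) P = pderiv v P := by
  conv_lhs => rw [P.as_sum]
  conv_rhs => rw [P.as_sum]
  rw [diffOp_sum_right, map_sum]
  refine Finset.sum_congr rfl fun e _ => ?_
  have : (X v : MvPolynomial σ ℚ) = monomial (Finsupp.single v 1) 1 := by
    rw [MvPolynomial.X]
  rw [this, diffOp_monomial_monomial, pderiv_monomial]
  congr 1
  rw [Finsupp.support_single_ne_zero v one_ne_zero]
  simp

section Det
variable {n : ℕ}

lemma pderiv_prod_zero {σ ι : Type} (v : σ) (s : Finset ι) (f : ι → MvPolynomial σ ℚ)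
    (h : ∀ i ∈ s, pderiv v (f i) = 0) : pderiv v (∏ i ∈ s, f i) = 0 := by
  induction s using Finset.induction with
  | empty => simp
  | @insert a s ha ih =>
    rw [Finset.prod_insert ha, pderiv_mul, h a (Finset.mem_insert_self a s),
      ih fun i hi => h i (Finset.mem_insert_of_mem hi)]
    simp

lemma det_row_expansion (A : Matrix (Fin n) (Fin n) (MvPolynomial (Fin n ⊕ Fin n) ℚ)) :
    A.det = ∑ σ : Equiv.Perm (Fin n),
      ((Equiv.Perm.sign σ : ℤ) : ℚ) • ∏ i, A i (σ i) := by
  rw [← Matrix.det_transpose, Matrix.det_apply']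
  refine Finset.sum_congr rfl fun σ _ => ?_
  rw [MvPolynomial.smul_eq_C_mul, map_intCast]
  rfl

lemma pderiv_det (r : Fin n) (A : Matrix (Fin n) (Fin n) (MvPolynomial (Fin n ⊕ Fin n) ℚ))
    (h : ∀ i j, i ≠ r → pderiv (Sum.inl r) (A i j) = 0) :
    pderiv (Sum.inl r) A.det =
      (A.updateRow r fun j => pderiv (Sum.inl r) (A r j)).det := by
  rw [det_row_expansion, det_row_expansion, map_sum]
  refine Finset.sum_congr rfl fun σ _ => ?_
  rw [Derivation.map_smul]
  congr 1
  rw [← Finset.mul_prod_erase Finset.univ _ (Finset.mem_univ r),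
    ← Finset.mul_prod_erase Finset.univ
      (fun i => (A.updateRow r fun j => pderiv (Sum.inl r) (A r j)) i (σ i)) (Finset.mem_univ r)]
  rw [pderiv_mul, pderiv_prod_zero _ _ _ (fun i hi => h i (σ i) (Finset.ne_of_mem_erase hi))]
  rw [Matrix.updateRow_self]
  have : ∀ i ∈ Finset.univ.erase r,
      (A.updateRow r fun j => pderiv (Sum.inl r) (A r j)) i (σ i) = A i (σ i) := by
    intro i hi
    rw [Matrix.updateRow_ne (Finset.ne_of_mem_erase hi)]
  rw [Finset.prod_congr rfl this]
  ring

lemma pderiv_pderiv_comm {σ : Type} (v w : σ) (p : MvPolynomial σ ℚ) :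
    pderiv v (pderiv w p) = pderiv w (pderiv v p) := by
  conv_lhs => rw [p.as_sum]
  conv_rhs => rw [p.as_sum]
  rw [map_sum, map_sum, map_sum, map_sum]
  refine Finset.sum_congr rfl fun e _ => ?_
  rw [pderiv_monomial, pderiv_monomial, pderiv_monomial, pderiv_monomial]
  rcases eq_or_ne v w with rfl | hvw
  · rfl
  · congr 1
    · rw [tsub_tsub, tsub_tsub, add_comm (Finsupp.single w 1)]
    · rw [Finsupp.tsub_apply, Finsupp.tsub_apply,
        Finsupp.single_eq_of_ne (Ne.symm hvw), Finsupp.single_eq_of_ne hvw,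
        Nat.sub_zero, Nat.sub_zero]
      ring

lemma pderiv_pderiv_zero {σ : Type} (v w : σ) (p : MvPolynomial σ ℚ)
    (h : pderiv v p = 0) : pderiv v (pderiv w p) = 0 := by
  rw [pderiv_pderiv_comm, h, map_zero]

lemma diffOp_prodX_det (S : Finset (Fin n))
    (A : Matrix (Fin n) (Fin n) (MvPolynomial (Fin n ⊕ Fin n) ℚ))
    (h : ∀ r i j, i ≠ r → pderiv (Sum.inl r) (A i j) = 0) :
    diffOp (∏ i ∈ S, X (Sum.inl i)) A.det
      = (Matrix.of fun i j =>
          if i ∈ S then pderiv (Sum.inl i) (A i j) else A i j).det := by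
  induction S using Finset.induction with
  | empty =>
    rw [Finset.prod_empty, diffOp_one]
    have hA : (Matrix.of fun i j =>
        if i ∈ (∅ : Finset (Fin n)) then pderiv (Sum.inl i) (A i j) else A i j) = A := by
      refine Matrix.ext fun i j => ?_
      simp
    rw [hA]
  | @insert r S hr ih =>
    rw [Finset.prod_insert hr, diffOp_mul, ih, diffOp_X_eq_pderiv]
    set B : Matrix (Fin n) (Fin n) (MvPolynomial (Fin n ⊕ Fin n) ℚ) :=
      Matrix.of fun i j => if i ∈ S then pderiv (Sum.inl i) (A i j) else A i j with hB
    have hBh : ∀ i j, i ≠ r → pderiv (Sum.inl r) (B i j) = 0 := by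
      intro i j hir
      show pderiv (Sum.inl r) (if i ∈ S then pderiv (Sum.inl i) (A i j) else A i j) = 0
      split
      · exact pderiv_pderiv_zero _ _ _ (h r i j hir)
      · exact h r i j hir
    rw [pderiv_det r B hBh]
    congr 1
    refine Matrix.ext fun i j => ?_
    rcases eq_or_ne i r with rfl | hir
    · rw [Matrix.updateRow_self]
      show pderiv (Sum.inl i) (if i ∈ S then pderiv (Sum.inl i) (A i j) else A i j) = _
      rw [if_neg hr]
      simp [Finset.mem_insert_self]
    · rw [Matrix.updateRow_ne hir]
      show (if i ∈ S then pderiv (Sum.inl i) (A i j) else A i j) = _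
      have : (i ∈ insert r S) = (i ∈ S) := by
        simp [Finset.mem_insert, hir]
      simp only [Matrix.of_apply, this]

lemma sum_det_swap (f g : Fin n → Fin n → MvPolynomial (Fin n ⊕ Fin n) ℚ) (k : ℕ) :
    ∑ S ∈ Finset.powersetCard k (Finset.univ : Finset (Fin n)),
      (Matrix.of fun i j => if i ∈ S then g i j else f i j).det
    = ∑ C ∈ Finset.powersetCard k (Finset.univ : Finset (Fin n)),
      (Matrix.of fun i j => if j ∈ C then g i j else f i j).det := by
  simp_rw [det_row_expansion]
  rw [Finset.sum_comm, Finset.sum_comm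
    (s := Finset.powersetCard k (Finset.univ : Finset (Fin n)))]
  refine Finset.sum_congr rfl fun σ _ => ?_
  refine Finset.sum_nbij' (fun S => S.image σ) (fun C => C.image σ.symm) ?_ ?_ ?_ ?_ ?_
  · intro S hS
    rw [Finset.mem_powersetCard] at hS ⊢
    exact ⟨Finset.subset_univ _, by
      rw [Finset.card_image_of_injective _ σ.injective, hS.2]⟩
  · intro C hC
    rw [Finset.mem_powersetCard] at hC ⊢
    exact ⟨Finset.subset_univ _, by
      rw [Finset.card_image_of_injective _ σ.symm.injective, hC.2]⟩
  · intro S _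
    show (S.image σ).image σ.symm = S
    rw [Finset.image_image]
    have h9 : ⇑σ.symm ∘ ⇑σ = id := by
      funext x; simp
    rw [h9, Finset.image_id]
  · intro C _
    show (C.image σ.symm).image σ = C
    rw [Finset.image_image]
    have h9 : ⇑σ ∘ ⇑σ.symm = id := by
      funext x; simp
    rw [h9, Finset.image_id]
  · intro S _
    congr 1
    refine Finset.prod_congr rfl fun i _ => ?_
    have hmem : (σ i ∈ S.image σ) ↔ (i ∈ S) := by
      simp only [Finset.mem_image]
      constructor
      · rintro ⟨x, hx, hxe⟩
        rwa [← σ.injective hxe]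
      · exact fun hi => ⟨i, hi, rfl⟩
    show (if i ∈ S then g i (σ i) else f i (σ i))
      = if σ i ∈ S.image σ then g i (σ i) else f i (σ i)
    by_cases hi : i ∈ S
    · rw [if_pos hi, if_pos (hmem.mpr hi)]
    · rw [if_neg hi, if_neg (fun hc => hi (hmem.mp hc))]

end Det

section LemmaA
variable {n : ℕ}

/-- matrix underlying Delta -/
noncomputable def Ent (L : Fin n → ℕ × ℕ) : Matrix (Fin n) (Fin n) (MvPolynomial (Fin n ⊕ Fin n) ℚ) :=
  Matrix.of fun i j : Fin n =>
    C ((((L j).1.factorial : ℚ) * ((L j).2.factorial : ℚ))⁻¹) *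
      X (Sum.inl i) ^ (L j).1 * X (Sum.inr i) ^ (L j).2

lemma Delta_eq_det (L : Fin n → ℕ × ℕ) : Delta n L = (Ent L).det := rfl

lemma pderiv_ent_ne (L : Fin n → ℕ × ℕ) (r i j : Fin n) (h : i ≠ r) :
    pderiv (Sum.inl r) (Ent L i j) = 0 := by
  have h1 : (Sum.inl i : Fin n ⊕ Fin n) ≠ Sum.inl r := by simp [h]
  have h2 : (Sum.inr i : Fin n ⊕ Fin n) ≠ Sum.inl r := by simp
  simp [Ent, pderiv_mul, pderiv_pow, pderiv_X_of_ne h1, pderiv_X_of_ne h2]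

lemma pderiv_ent_self (L : Fin n → ℕ × ℕ) (i j : Fin n) :
    pderiv (Sum.inl i) (Ent L i j) =
      (((L j).1 : ℚ)) • (C ((((L j).1.factorial : ℚ) * ((L j).2.factorial : ℚ))⁻¹) *
        X (Sum.inl i) ^ ((L j).1 - 1) * X (Sum.inr i) ^ (L j).2) := by
  have h2 : (Sum.inr i : Fin n ⊕ Fin n) ≠ Sum.inl i := by simp
  simp only [Ent, Matrix.of_apply, pderiv_mul, pderiv_pow, pderiv_X_of_ne h2,
    pderiv_X_self, pderiv_C]
  simp only [MvPolynomial.smul_eq_C_mul]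
  rw [← map_natCast (C : ℚ →+* MvPolynomial (Fin n ⊕ Fin n) ℚ) (L j).1]
  push_cast
  ring

lemma det_dec_eq (L : Fin n → ℕ × ℕ) (Cs : Finset (Fin n)) :
    (Matrix.of fun i j => if j ∈ Cs then pderiv (Sum.inl i) (Ent L i j) else Ent L i j).det
      = DeltaZ n (fun j => (((L j).1 : ℤ) - (if j ∈ Cs then 1 else 0), ((L j).2 : ℤ))) := by
  by_cases hC : ∀ j ∈ Cs, 1 ≤ (L j).1
  · -- positive case
    have hpos : ∀ j, (0:ℤ) ≤ ((L j).1 : ℤ) - (if j ∈ Cs then 1 else 0) ∧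
        (0:ℤ) ≤ ((L j).2 : ℤ) := by
      intro j
      refine ⟨?_, by positivity⟩
      split
      · next hj => have := hC j hj; omega
      · omega
    rw [DeltaZ, if_pos hpos, Delta_eq_det]
    congr 1
    refine Matrix.ext fun i j => ?_
    show (if j ∈ Cs then pderiv (Sum.inl i) (Ent L i j) else Ent L i j) = _
    by_cases hj : j ∈ Cs
    · rw [if_pos hj, pderiv_ent_self]
      have hL1 : 1 ≤ (L j).1 := hC j hj
      have e1 : (((L j).1 : ℤ) - (if j ∈ Cs then 1 else 0)).toNat = (L j).1 - 1 := by
        rw [if_pos hj]; omega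
      have e2 : (((L j).2 : ℤ)).toNat = (L j).2 := by omega
      show _ = Ent _ i j
      simp only [Ent, Matrix.of_apply, e1, e2]
      rw [MvPolynomial.smul_eq_C_mul]
      rw [← mul_assoc, ← mul_assoc, ← map_mul]
      congr 2
      have hfac : ((L j).1.factorial : ℚ) = ((L j).1 : ℚ) * (((L j).1 - 1).factorial : ℚ) := by
        exact_mod_cast (Nat.mul_factorial_pred (by omega : (L j).1 ≠ 0)).symm
      rw [hfac]
      have h1 : ((L j).1 : ℚ) ≠ 0 := by positivity
      have h2 : (((L j).1 - 1).factorial : ℚ) ≠ 0 := by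
        exact_mod_cast Nat.cast_ne_zero.mpr (Nat.factorial_ne_zero _)
      have h3 : ((L j).2.factorial : ℚ) ≠ 0 := by
        exact_mod_cast Nat.cast_ne_zero.mpr (Nat.factorial_ne_zero _)
      field_simp
    · rw [if_neg hj]
      have e1 : (((L j).1 : ℤ) - (if j ∈ Cs then 1 else 0)).toNat = (L j).1 := by
        rw [if_neg hj]; omega
      have e2 : (((L j).2 : ℤ)).toNat = (L j).2 := by omega
      show Ent L i j = Ent _ i j
      simp only [Ent, Matrix.of_apply, e1, e2]
  · -- some column has zero first coordinate
    push_neg at hC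
    obtain ⟨j0, hj0, hLj0⟩ := hC
    have hL0 : (L j0).1 = 0 := by omega
    rw [Matrix.det_eq_zero_of_column_eq_zero j0, eq_comm]
    · rw [DeltaZ, if_neg]
      intro hall
      have := (hall j0).1
      rw [if_pos hj0, hL0] at this
      simp at this
    · intro i
      show (if j0 ∈ Cs then pderiv (Sum.inl i) (Ent L i j0) else Ent L i j0) = 0
      rw [if_pos hj0, pderiv_ent_self, hL0]
      simp

lemma lemmaA_nat (k : ℕ) (L : Fin n → ℕ × ℕ) :
    diffOp (rename Sum.inl (esymm (Fin n) ℚ k)) (Delta n L)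
      = ∑ Cs ∈ Finset.powersetCard k (Finset.univ : Finset (Fin n)),
          DeltaZ n (fun j => (((L j).1 : ℤ) - (if j ∈ Cs then 1 else 0), ((L j).2 : ℤ))) := by
  have hes : rename (Sum.inl : Fin n → Fin n ⊕ Fin n) (esymm (Fin n) ℚ k)
      = ∑ S ∈ Finset.powersetCard k (Finset.univ : Finset (Fin n)),
          ∏ i ∈ S, X (Sum.inl i) := by
    rw [MvPolynomial.esymm, map_sum]
    refine Finset.sum_congr rfl fun S _ => ?_
    rw [map_prod]
    exact Finset.prod_congr rfl fun i _ => rename_X _ _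
  rw [hes, diffOp_sum_left]
  have step : ∀ S ∈ Finset.powersetCard k (Finset.univ : Finset (Fin n)),
      diffOp (∏ i ∈ S, X (Sum.inl i)) (Delta n L)
        = (Matrix.of fun i j =>
            if i ∈ S then pderiv (Sum.inl i) (Ent L i j) else Ent L i j).det := by
    intro S _
    rw [Delta_eq_det]
    exact diffOp_prodX_det S (Ent L) (fun r i j h => pderiv_ent_ne L r i j h)
  rw [Finset.sum_congr rfl step, sum_det_swap (fun i j => Ent L i j)
    (fun i j => pderiv (Sum.inl i) (Ent L i j)) k]
  exact Finset.sum_congr rfl fun Cs _ => det_dec_eq L Cs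

lemma cnt_eq_ite (k : ℕ) (T : Fin k → Fin n) (hT : Function.Injective T) (j : Fin n) :
    ((Finset.univ.filter fun r => T r = j).card : ℤ)
      = (if j ∈ Finset.image T Finset.univ then 1 else 0) := by
  by_cases hj : j ∈ Finset.image T Finset.univ
  · obtain ⟨r0, _, hr0⟩ := Finset.mem_image.mp hj
    rw [if_pos hj]
    have : (Finset.univ.filter fun r => T r = j) = {r0} := by
      ext r
      simp only [Finset.mem_filter, Finset.mem_univ, true_and, Finset.mem_singleton]
      constructor
      · intro h; exact hT (h.trans hr0.symm)
      · rintro rfl; exact hr0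
    rw [this]
    simp
  · rw [if_neg hj]
    have : (Finset.univ.filter fun r => T r = j) = ∅ := by
      ext r
      simp only [Finset.mem_filter, Finset.mem_univ, true_and, Finset.notMem_empty,
        iff_false]
      intro h
      exact hj (Finset.mem_image.mpr ⟨r, Finset.mem_univ r, h⟩)
    rw [this]
    simp

lemma lemmaA (k : ℕ) (M : Fin n → ℤ × ℤ) :
    diffOp (rename Sum.inl (esymm (Fin n) ℚ k)) (DeltaZ n M)
      = ∑ T ∈ Finset.univ.filter (fun T : Fin k → Fin n => StrictMono T),
          DeltaZ n (fun i => ((M i).1 - ((Finset.univ.filter fun r => T r = i).card : ℤ),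
            (M i).2)) := by
  by_cases hM : ∀ i, 0 ≤ (M i).1 ∧ 0 ≤ (M i).2
  · rw [DeltaZ, if_pos hM, lemmaA_nat]
    refine (Finset.sum_bij (fun (T : Fin k → Fin n) (hT : T ∈ Finset.univ.filter
        (fun T : Fin k → Fin n => StrictMono T)) => Finset.image T Finset.univ)
      ?_ ?_ ?_ ?_).symm
    · intro T hT
      rw [Finset.mem_filter] at hT
      rw [Finset.mem_powersetCard]
      refine ⟨Finset.subset_univ _, ?_⟩
      rw [Finset.card_image_of_injective _ hT.2.injective, Finset.card_univ,
        Fintype.card_fin]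
    · intro T1 hT1 T2 hT2 himg
      rw [Finset.mem_filter] at hT1 hT2
      have hc1 : (Finset.image T1 Finset.univ).card = k := by
        rw [Finset.card_image_of_injective _ hT1.2.injective, Finset.card_univ,
          Fintype.card_fin]
      have e1 := Finset.orderEmbOfFin_unique hc1
        (fun x => Finset.mem_image_of_mem T1 (Finset.mem_univ x)) hT1.2
      have himg' : Finset.image T1 Finset.univ = Finset.image T2 Finset.univ := himg
      have e2 := Finset.orderEmbOfFin_unique hc1
        (fun x => by rw [himg']; exact Finset.mem_image_of_mem T2 (Finset.mem_univ x)) hT2.2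
      funext x
      exact (congrFun e1 x).trans (congrFun e2 x).symm
    · intro Cs hCs
      rw [Finset.mem_powersetCard] at hCs
      refine ⟨Cs.orderEmbOfFin hCs.2, Finset.mem_filter.mpr
        ⟨Finset.mem_univ _, (Cs.orderEmbOfFin hCs.2).strictMono⟩, ?_⟩
      apply Finset.coe_injective
      rw [Finset.coe_image, Finset.coe_univ, Set.image_univ]
      exact (Finset.range_orderEmbOfFin Cs hCs.2)
    · intro T hTmem
      have hT := Finset.mem_filter.mp hTmem
      congr 1
      funext j
      beta_reduce
      simp [cnt_eq_ite k T hT.2.injective j, Int.toNat_of_nonneg (hM j).1,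
        Int.toNat_of_nonneg (hM j).2]
  · rw [DeltaZ, if_neg hM, diffOp_zero_right, eq_comm]
    refine Finset.sum_eq_zero fun T _ => ?_
    rw [DeltaZ, if_neg]
    intro hall
    apply hM
    intro i
    have h1 := (hall i).1
    have h2 := (hall i).2
    constructor
    · have : (0:ℤ) ≤ ((Finset.univ.filter fun r => T r = i).card : ℤ) := by positivity
      omega
    · exact h2

end LemmaA

section Main
variable {n : ℕ}

lemma eps_smul (N : Fin n → ℤ × ℤ) : eps n N • DeltaZ n N = DeltaZ n N := by
  rw [eps]
  split
  · rw [one_smul]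
  · next h =>
    have hz : DeltaZ n N = 0 := by
      by_cases hpos : ∀ i, 0 ≤ (N i).1 ∧ 0 ≤ (N i).2
      · have hninj : ¬ Function.Injective N := fun hinj => h ⟨hinj, hpos⟩
        obtain ⟨a, b, hab, hne⟩ := Function.not_injective_iff.mp hninj
        rw [DeltaZ, if_pos hpos, Delta]
        apply Matrix.det_zero_of_column_eq hne
        intro i
        simp only [Matrix.of_apply, hab]
      · rw [DeltaZ, if_neg hpos]
    rw [hz, smul_zero]

variable {ℓ : ℕ} (α : Fin (ℓ + 1) → ℕ)

lemma tailCount_cons (T0 : Fin (α 0) → Fin n)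
    (T' : ∀ j : Fin ℓ, Fin (α j.succ) → Fin n) (k : ℕ) (i : Fin n) :
    tailCount n α (Fin.cons T0 T') k i
      = (if k = 0 then (Finset.univ.filter fun r => T0 r = i).card else 0)
        + tailCount n (fun j => α j.succ) T' (k - 1) i := by
  rw [tailCount, Fin.sum_univ_succ, tailCount]
  congr 1
  · rw [Fin.cons_zero, show ((0 : Fin (ℓ+1)) : ℕ) = 0 from rfl]
    rcases Nat.eq_zero_or_pos k with rfl | hk
    · simp
    · rw [if_neg (by omega), if_neg (by omega)]
  · refine Finset.sum_congr rfl fun j _ => ?_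
    have hc : Fin.cons (α := fun j => Fin (α j) → Fin n) T0 T' j.succ = T' j :=
      Fin.cons_succ _ _ _
    rw [hc]
    have hiff : (k ≤ ((j.succ : Fin (ℓ+1)) : ℕ)) ↔ (k - 1 ≤ (j : ℕ)) := by
      rw [Fin.val_succ]; omega
    rw [if_congr hiff rfl rfl]

lemma applyTail_cons_succ (T0 : Fin (α 0) → Fin n)
    (T' : ∀ j : Fin ℓ, Fin (α j.succ) → Fin n) (k : ℕ) (L : Fin n → ℤ × ℤ) :
    applyTail n α (Fin.cons T0 T') (k + 1) L
      = applyTail n (fun j => α j.succ) T' k L := by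
  funext i
  rw [applyTail, applyTail, tailCount_cons]
  simp

lemma applyTail_cons_zero (T0 : Fin (α 0) → Fin n)
    (T' : ∀ j : Fin ℓ, Fin (α j.succ) → Fin n) (L : Fin n → ℤ × ℤ) :
    applyTail n α (Fin.cons T0 T') 0 L
      = fun i => ((applyTail n (fun j => α j.succ) T' 0 L i).1
          - ((Finset.univ.filter fun r => T0 r = i).card : ℤ),
          (applyTail n (fun j => α j.succ) T' 0 L i).2) := by
  funext i
  rw [applyTail, applyTail, tailCount_cons]
  simp only [if_pos rfl, Nat.zero_sub]
  push_cast
  simp only [Prod.mk.injEq]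
  exact ⟨by ring, trivial⟩

lemma epsTuple_cons (T0 : Fin (α 0) → Fin n)
    (T' : ∀ j : Fin ℓ, Fin (α j.succ) → Fin n) (L : Fin n → ℤ × ℤ) :
    epsTuple n α (Fin.cons T0 T') L
      = eps n (applyTail n α (Fin.cons T0 T') 0 L)
        * epsTuple n (fun j => α j.succ) T' L := by
  rw [epsTuple, Fin.prod_univ_succ, epsTuple]
  congr 1
  refine Finset.prod_congr rfl fun k _ => ?_
  rw [show ((k.succ : Fin (ℓ+1)) : ℕ) = (k : ℕ) + 1 from rfl, applyTail_cons_succ]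

end Main

lemma main_thm (n : ℕ) : ∀ (ℓ : ℕ) (α : Fin ℓ → ℕ) (L : Fin n → ℤ × ℤ),
    diffOp (rename Sum.inl (∏ j : Fin ℓ, esymm (Fin n) ℚ (α j))) (DeltaZ n L) =
      ∑ T ∈ Finset.univ.filter
          (fun T : ∀ j : Fin ℓ, Fin (α j) → Fin n => ∀ j, StrictMono (T j)),
        epsTuple n α T L • DeltaZ n (applyTail n α T 0 L) := by
  intro ℓ
  induction ℓ with
  | zero =>
    intro α L
    rw [Fin.prod_univ_zero, map_one, diffOp_one,
      Finset.filter_true_of_mem (fun T _ => fun j => Fin.elim0 j),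
      Finset.univ_unique, Finset.sum_singleton]
    have h1 : epsTuple n α default L = 1 := by
      rw [epsTuple]
      exact Fin.prod_univ_zero _
    have h2 : applyTail n α default 0 L = L := by
      funext i
      rw [applyTail, tailCount]
      simp
    rw [h1, h2, one_smul]
  | succ ℓ IH =>
    intro α L
    rw [Fin.prod_univ_succ, map_mul, diffOp_mul, IH (fun j => α j.succ) L, diffOp_sum_right]
    have hstep : ∀ T' ∈ Finset.univ.filter
        (fun T' : ∀ j : Fin ℓ, Fin (α j.succ) → Fin n => ∀ j, StrictMono (T' j)),
        diffOp (rename Sum.inl (esymm (Fin n) ℚ (α 0)))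
          (epsTuple n (fun j => α j.succ) T' L •
            DeltaZ n (applyTail n (fun j => α j.succ) T' 0 L))
        = ∑ T0 ∈ Finset.univ.filter (fun T0 : Fin (α 0) → Fin n => StrictMono T0),
            epsTuple n α (Fin.cons T0 T') L •
              DeltaZ n (applyTail n α (Fin.cons T0 T') 0 L) := by
      intro T' _
      rw [diffOp_smul_right, lemmaA, Finset.smul_sum]
      refine Finset.sum_congr rfl fun T0 _ => ?_
      rw [epsTuple_cons, applyTail_cons_zero]
      rw [mul_comm, mul_smul, eps_smul]
    rw [Finset.sum_congr rfl hstep]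
    -- now compare double sum with single sum over (ℓ+1)-tuples
    have hcond : ∀ (T0 : Fin (α 0) → Fin n) (T' : ∀ j : Fin ℓ, Fin (α j.succ) → Fin n),
        (∀ j, StrictMono ((Fin.cons (α := fun j => Fin (α j) → Fin n) T0 T') j))
          ↔ (StrictMono T0 ∧ ∀ j, StrictMono (T' j)) := by
      intro T0 T'
      constructor
      · intro h
        refine ⟨?_, fun j => ?_⟩
        · have := h 0
          rwa [Fin.cons_zero] at this
        · have := h j.succ
          rwa [Fin.cons_succ] at this
      · rintro ⟨h0, h'⟩ j
        refine Fin.cases ?_ ?_ j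
        · rwa [Fin.cons_zero]
        · intro j'
          rw [Fin.cons_succ]
          exact h' j'
    have hRHS : ∑ T ∈ Finset.univ.filter
        (fun T : ∀ j : Fin (ℓ+1), Fin (α j) → Fin n => ∀ j, StrictMono (T j)),
        epsTuple n α T L • DeltaZ n (applyTail n α T 0 L)
      = ∑ T0 : Fin (α 0) → Fin n, ∑ T' : ∀ j : Fin ℓ, Fin (α j.succ) → Fin n,
          if StrictMono T0 ∧ ∀ j, StrictMono (T' j) then
            epsTuple n α (Fin.cons T0 T') L •
              DeltaZ n (applyTail n α (Fin.cons T0 T') 0 L) else 0 := by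
      rw [Finset.sum_filter]
      rw [← Equiv.sum_comp (Fin.consEquiv (fun j => Fin (α j) → Fin n))
        (fun T => if ∀ j, StrictMono (T j) then
          epsTuple n α T L • DeltaZ n (applyTail n α T 0 L) else 0)]
      rw [Fintype.sum_prod_type]
      refine Finset.sum_congr rfl fun T0 _ => Finset.sum_congr rfl fun T' _ => ?_
      have happ : (Fin.consEquiv (fun j => Fin (α j) → Fin n)) (T0, T')
          = Fin.cons T0 T' := rfl
      rw [happ]  -- may be unnecessary
      exact if_congr (hcond T0 T') rfl rfl
    rw [hRHS]
    have hswap : ∀ (T0 : Fin (α 0) → Fin n),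
        (∑ T' : ∀ j : Fin ℓ, Fin (α j.succ) → Fin n,
          if StrictMono T0 ∧ ∀ j, StrictMono (T' j) then
            epsTuple n α (Fin.cons T0 T') L •
              DeltaZ n (applyTail n α (Fin.cons T0 T') 0 L) else 0)
        = ∑ T' ∈ Finset.univ.filter
            (fun T' : ∀ j : Fin ℓ, Fin (α j.succ) → Fin n => ∀ j, StrictMono (T' j)),
            (if StrictMono T0 then epsTuple n α (Fin.cons T0 T') L •
              DeltaZ n (applyTail n α (Fin.cons T0 T') 0 L) else 0) := by
      intro T0
      rw [Finset.sum_filter]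
      refine Finset.sum_congr rfl fun T' _ => ?_
      by_cases h0 : StrictMono T0 <;> by_cases h' : ∀ j, StrictMono (T' j) <;>
        simp [h0, h']
    conv_rhs => rw [Finset.sum_congr rfl fun T0 _ => hswap T0]
    rw [Finset.sum_comm]
    have hpull : ∀ T0 : Fin (α 0) → Fin n,
        (∑ T' ∈ Finset.univ.filter
            (fun T' : ∀ j : Fin ℓ, Fin (α j.succ) → Fin n => ∀ j, StrictMono (T' j)),
          if StrictMono T0 then epsTuple n α (Fin.cons T0 T') L •
            DeltaZ n (applyTail n α (Fin.cons T0 T') 0 L) else 0)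
        = if StrictMono T0 then (∑ T' ∈ Finset.univ.filter
            (fun T' : ∀ j : Fin ℓ, Fin (α j.succ) → Fin n => ∀ j, StrictMono (T' j)),
            epsTuple n α (Fin.cons T0 T') L •
              DeltaZ n (applyTail n α (Fin.cons T0 T') 0 L)) else 0 := by
      intro T0
      by_cases h0 : StrictMono T0 <;> simp [h0]
    conv_rhs => rw [Finset.sum_congr rfl fun T0 _ => hpull T0]
    rw [← Finset.sum_filter]

open Classical in
theorem stmt9 (n ℓ : ℕ) (α : Fin ℓ → ℕ) (L : Fin n → ℤ × ℤ)
    (hinj : Function.Injective L) (hpos : ∀ i, 0 ≤ (L i).1 ∧ 0 ≤ (L i).2) :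
    diffOp (rename Sum.inl (∏ j : Fin ℓ, esymm (Fin n) ℚ (α j))) (DeltaZ n L) =
      ∑ T ∈ Finset.univ.filter
          (fun T : ∀ j : Fin ℓ, Fin (α j) → Fin n => ∀ j, StrictMono (T j)),
        epsTuple n α T L • DeltaZ n (applyTail n α T 0 L) :=
  main_thm n ℓ α L
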